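/- Let 𝔘 be a symmetrically pseudo-amenable Banach algebra and J a closed two-sided ideal of 𝔘. If J has an approximate identity {e_i} such that the multiplication operators a ↦ e_i a and a ↦ a e_i from 𝔘 into J are uniformly bounded, then J is symmetrically pseudo-amenable. -/

import Mathlib

open Filter Topology

universe u

/-- A realization of the projective Banach-space tensor square `A ⊗̂ A` of a (non-unital)
Banach algebra `A`, together with the canonical bimodule operations `a•t`, `t•a`, the
"opposite" operations `a∘t`, `t∘a`, the product maps `π`, `π°` and the flip map, each
characterized by its values on elementary tensors.  The norm is the projective tensor norm:
`‖a ⊗ b‖ ≤ ‖a‖‖b‖` and every element is an absolutely convergent sum of elementary tensors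
whose total norm is arbitrarily close to its norm; moreover bounded bilinear maps lift. -/
structure ProjTensorSquare (A : Type u) [NonUnitalNormedRing A] [NormedSpace ℂ A]
    [IsScalarTower ℂ A A] [SMulCommClass ℂ A A] [CompleteSpace A] where
  /-- the underlying Banach space of `A ⊗̂ A` -/
  T : Type u
  [nacg : NormedAddCommGroup T]
  [nsp : NormedSpace ℂ T]
  [cplt : CompleteSpace T]
  /-- the canonical bilinear map `(a, b) ↦ a ⊗ b` -/
  tmul : A →L[ℂ] A →L[ℂ] T
  norm_tmul_le : ∀ a b : A, ‖tmul a b‖ ≤ ‖a‖ * ‖b‖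
  /-- the projective norm property -/
  exists_rep : ∀ (t : T) (ε : ℝ), 0 < ε → ∃ u v : ℕ → A,
      Summable (fun n => ‖u n‖ * ‖v n‖) ∧ HasSum (fun n => tmul (u n) (v n)) t ∧
      ∑' n, ‖u n‖ * ‖v n‖ ≤ ‖t‖ + ε
  /-- the universal property: bounded bilinear maps into a Banach space lift to `T` -/
  lift : ∀ {X : Type u} [NormedAddCommGroup X] [NormedSpace ℂ X] [CompleteSpace X]
      (f : A →L[ℂ] A →L[ℂ] X), ∃ g : T →L[ℂ] X, (∀ a b, g (tmul a b) = f a b) ∧ ‖g‖ ≤ ‖f‖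
  /-- the left module action: `a • (b ⊗ c) = (a * b) ⊗ c` -/
  lmul : A → T →L[ℂ] T
  lmul_tmul : ∀ a b c, lmul a (tmul b c) = tmul (a * b) c
  /-- the right module action: `(b ⊗ c) • a = b ⊗ (c * a)` -/
  rmul : A → T →L[ℂ] T
  rmul_tmul : ∀ a b c, rmul a (tmul b c) = tmul b (c * a)
  /-- the left opposite action: `a ∘ (b ⊗ c) = b ⊗ (a * c)` -/
  lcirc : A → T →L[ℂ] T
  lcirc_tmul : ∀ a b c, lcirc a (tmul b c) = tmul b (a * c)
  /-- the right opposite action: `(b ⊗ c) ∘ a = (b * a) ⊗ c` -/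
  rcirc : A → T →L[ℂ] T
  rcirc_tmul : ∀ a b c, rcirc a (tmul b c) = tmul (b * a) c
  /-- the product map `π : b ⊗ c ↦ b * c` -/
  π : T →L[ℂ] A
  π_tmul : ∀ b c, π (tmul b c) = b * c
  /-- the opposite product map `π° : b ⊗ c ↦ c * b` -/
  πop : T →L[ℂ] A
  πop_tmul : ∀ b c, πop (tmul b c) = c * b
  /-- the flip map `(b ⊗ c)° = c ⊗ b` -/
  flip : T →L[ℂ] T
  flip_tmul : ∀ b c, flip (tmul b c) = tmul c b

attribute [instance] ProjTensorSquare.nacg ProjTensorSquare.nsp ProjTensorSquare.cplt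

namespace ProjTensorSquare

variable {A : Type u} [NonUnitalNormedRing A] [NormedSpace ℂ A]
    [IsScalarTower ℂ A A] [SMulCommClass ℂ A A] [CompleteSpace A]

/-- `t` is an approximate diagonal for `A` consisting of symmetric tensors, along the
filter `l`:  each `t i` is symmetric, `a • tᵢ - tᵢ • a → 0` and `π(tᵢ) a → a` for all `a`. -/
def IsSymmApproxDiagonal (P : ProjTensorSquare A) {ι : Type u} (l : Filter ι)
    (t : ι → P.T) : Prop :=
  (∀ i, P.flip (t i) = t i) ∧
  (∀ a : A, Tendsto (fun i => P.lmul a (t i) - P.rmul a (t i)) l (𝓝 0)) ∧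
  (∀ a : A, Tendsto (fun i => P.π (t i) * a) l (𝓝 a))

/-- A Banach algebra is symmetrically pseudo-amenable if it has a (not necessarily bounded)
approximate diagonal consisting of symmetric tensors. -/
def SymmPseudoAmenable (P : ProjTensorSquare A) : Prop :=
  ∃ (ι : Type u) (l : Filter ι) (t : ι → P.T), l.NeBot ∧ P.IsSymmApproxDiagonal l t

end ProjTensorSquare
section AuxLemmas

variable {A : Type u} [NonUnitalNormedRing A] [NormedSpace ℂ A]
    [IsScalarTower ℂ A A] [SMulCommClass ℂ A A] [CompleteSpace A] (P : ProjTensorSquare A)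

theorem Filter.curry_neBot {α β : Type*} {l : Filter α} {m : Filter β} [l.NeBot] [m.NeBot] :
    (l.curry m).NeBot := by
  rw [← Filter.forall_mem_nonempty_iff_neBot]
  intro s hs
  rw [Filter.mem_curry_iff] at hs
  obtain ⟨a, ha⟩ := hs.exists
  obtain ⟨b, hb⟩ := ha.exists
  exact ⟨(a, b), hb⟩

namespace ProjTensorSquare

theorem ext_clm {X : Type*} [NormedAddCommGroup X] [NormedSpace ℂ X]
    (g h : P.T →L[ℂ] X) (H : ∀ a b, g (P.tmul a b) = h (P.tmul a b)) (t : P.T) :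
    g t = h t := by
  obtain ⟨u, v, -, hhas, -⟩ := P.exists_rep t 1 one_pos
  have hg : HasSum (fun n => g (P.tmul (u n) (v n))) (g t) := hhas.mapL g
  have hh : HasSum (fun n => h (P.tmul (u n) (v n))) (h t) := hhas.mapL h
  simp only [H] at hg
  exact hg.unique hh

theorem norm_clm_le {X : Type*} [NormedAddCommGroup X] [NormedSpace ℂ X]
    (g : P.T →L[ℂ] X) (C : ℝ) (hC : 0 ≤ C)
    (H : ∀ a b, ‖g (P.tmul a b)‖ ≤ C * (‖a‖ * ‖b‖)) (t : P.T) : ‖g t‖ ≤ C * ‖t‖ := by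
  have key : ∀ ε : ℝ, 0 < ε → ‖g t‖ ≤ C * (‖t‖ + ε) := by
    intro ε hε
    obtain ⟨u, v, hsum, hhas, hle⟩ := P.exists_rep t ε hε
    have hg : HasSum (fun n => g (P.tmul (u n) (v n))) (g t) := hhas.mapL g
    have hsum2 : Summable (fun n => ‖g (P.tmul (u n) (v n))‖) :=
      Summable.of_nonneg_of_le (fun n => norm_nonneg _)
        (fun n => H (u n) (v n)) (hsum.mul_left C)
    calc ‖g t‖ = ‖∑' n, g (P.tmul (u n) (v n))‖ := by rw [hg.tsum_eq]
      _ ≤ ∑' n, ‖g (P.tmul (u n) (v n))‖ := norm_tsum_le_tsum_norm hsum2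
      _ ≤ ∑' n, C * (‖u n‖ * ‖v n‖) :=
          Summable.tsum_le_tsum (fun n => H _ _) hsum2 (hsum.mul_left C)
      _ = C * ∑' n, ‖u n‖ * ‖v n‖ := tsum_mul_left
      _ ≤ C * (‖t‖ + ε) := mul_le_mul_of_nonneg_left hle hC
  rcases eq_or_lt_of_le hC with hC0 | hC0
  · simpa [← hC0] using key 1 one_pos
  · refine le_of_forall_pos_le_add fun δ hδ => ?_
    have := key (δ / C) (div_pos hδ hC0)
    rw [mul_add, mul_div_cancel₀ _ (ne_of_gt hC0)] at this
    exact this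

theorem exists_finset_approx (t : P.T) {ε : ℝ} (hε : 0 < ε) :
    ∃ (F : Finset ℕ) (u v : ℕ → A), ‖t - ∑ n ∈ F, P.tmul (u n) (v n)‖ < ε := by
  obtain ⟨u, v, -, hhas, -⟩ := P.exists_rep t 1 one_pos
  have h2 : ∀ᶠ F in (Filter.atTop : Filter (Finset ℕ)),
      dist (∑ n ∈ F, P.tmul (u n) (v n)) t < ε := Metric.tendsto_nhds.mp hhas ε hε
  obtain ⟨F, hF⟩ := h2.exists
  exact ⟨F, u, v, by rwa [dist_comm, dist_eq_norm] at hF⟩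

end ProjTensorSquare
end AuxLemmas
set_option maxHeartbeats 2000000 in
/-- Let `𝔘` be a symmetrically pseudo-amenable Banach algebra and `J` a closed
two-sided ideal of `𝔘`.  If `J` has an approximate identity `{e_i}` such that the multiplication
operators `a ↦ e_i a` and `a ↦ a e_i` from `𝔘` into `J` are uniformly bounded, then `J` is
symmetrically pseudo-amenable. -/
theorem symmPseudoAmenable_ideal {A : Type u} [NonUnitalNormedRing A] [NormedSpace ℂ A]
    [IsScalarTower ℂ A A] [SMulCommClass ℂ A A] [CompleteSpace A]
    (P : ProjTensorSquare A) (h : P.SymmPseudoAmenable)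
    (J : NonUnitalSubalgebra ℂ A)
    (hJl : ∀ a x : A, x ∈ J → a * x ∈ J) (hJr : ∀ a x : A, x ∈ J → x * a ∈ J)
    (hJc : IsClosed (J : Set A))
    {ι : Type u} (l : Filter ι) [l.NeBot] (e : ι → J)
    (happrox : ∀ x : J, Tendsto (fun i => e i * x) l (𝓝 x) ∧
      Tendsto (fun i => x * e i) l (𝓝 x))
    (hbdd : ∃ M : ℝ, 1 ≤ M ∧ ∀ (i : ι) (a : A),
      ‖(e i : A) * a‖ ≤ M * ‖a‖ ∧ ‖a * (e i : A)‖ ≤ M * ‖a‖)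
    (PJ : @ProjTensorSquare J _ (SubmoduleClass.toNormedSpace J) _ _ hJc.completeSpace_coe) :
    @ProjTensorSquare.SymmPseudoAmenable J _ (SubmoduleClass.toNormedSpace J) _ _ hJc.completeSpace_coe PJ := by
  classical
  haveI : CompleteSpace J := hJc.completeSpace_coe
  letI : NormedSpace ℂ J := SubmoduleClass.toNormedSpace J
  letI : NormedAddCommGroup PJ.T := PJ.nacg
  letI : NormedSpace ℂ PJ.T := PJ.nsp
  haveI : CompleteSpace PJ.T := PJ.cplt
  obtain ⟨M, hM1, hMb⟩ := hbdd
  have hM0 : (0:ℝ) < M := lt_of_lt_of_le one_pos hM1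
  obtain ⟨κ, m, t, hm, hflip, hcomm, hπ⟩ := h
  -- the left and right compression operators A →L J
  have memL : ∀ (i : ι) (a : A), ((e i : A) * a) ∈ J := fun i a => hJr a _ (e i).2
  have memR : ∀ (i : ι) (a : A), (a * (e i : A)) ∈ J := fun i a => hJl a _ (e i).2
  set L : ι → A →L[ℂ] J := fun i => LinearMap.mkContinuous
    { toFun := fun a => (⟨(e i : A) * a, memL i a⟩ : J)
      map_add' := fun a b => Subtype.ext (mul_add _ _ _)
      map_smul' := fun c a => Subtype.ext (by simpa using mul_smul_comm c ((e i : A)) a) } M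
    (fun a => (hMb i a).1) with hLdef
  set R : ι → A →L[ℂ] J := fun i => LinearMap.mkContinuous
    { toFun := fun a => (⟨a * (e i : A), memR i a⟩ : J)
      map_add' := fun a b => Subtype.ext (add_mul _ _ _)
      map_smul' := fun c a => Subtype.ext (by simpa using smul_mul_assoc c a ((e i : A))) } M
    (fun a => (hMb i a).2) with hRdef
  have hLa : ∀ (i : ι) (a : A), ((L i a : A)) = (e i : A) * a := fun i a => rfl
  have hRa : ∀ (i : ι) (a : A), ((R i a : A)) = a * (e i : A) := fun i a => rfl
  have hLn : ∀ (i : ι) (a : A), ‖L i a‖ ≤ M * ‖a‖ := fun i a => (hMb i a).1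
  have hRn : ∀ (i : ι) (a : A), ‖R i a‖ ≤ M * ‖a‖ := fun i a => (hMb i a).2
  -- the bilinear maps
  set f : ι → A →L[ℂ] A →L[ℂ] PJ.T := fun i => LinearMap.mkContinuous₂
    (LinearMap.mk₂ ℂ (fun a b => PJ.tmul (L i a) (R i b))
      (fun a a' b => by simp only [map_add, ContinuousLinearMap.add_apply])
      (fun c a b => by simp only [map_smul, ContinuousLinearMap.smul_apply])
      (fun a b b' => by simp only [map_add])
      (fun c a b => by simp only [map_smul]))
    (M * M)
    (fun a b => by
      refine (PJ.norm_tmul_le _ _).trans ?_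
      calc ‖L i a‖ * ‖R i b‖ ≤ (M * ‖a‖) * (M * ‖b‖) :=
            mul_le_mul (hLn i a) (hRn i b) (norm_nonneg _)
              (by positivity)
        _ = M * M * ‖a‖ * ‖b‖ := by ring) with hfdef
  set f' : ι → A →L[ℂ] A →L[ℂ] PJ.T := fun i => LinearMap.mkContinuous₂
    (LinearMap.mk₂ ℂ (fun a b => PJ.tmul (R i a) (L i b))
      (fun a a' b => by simp only [map_add, ContinuousLinearMap.add_apply])
      (fun c a b => by simp only [map_smul, ContinuousLinearMap.smul_apply])
      (fun a b b' => by simp only [map_add])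
      (fun c a b => by simp only [map_smul]))
    (M * M)
    (fun a b => by
      refine (PJ.norm_tmul_le _ _).trans ?_
      calc ‖R i a‖ * ‖L i b‖ ≤ (M * ‖a‖) * (M * ‖b‖) :=
            mul_le_mul (hRn i a) (hLn i b) (norm_nonneg _)
              (by positivity)
        _ = M * M * ‖a‖ * ‖b‖ := by ring) with hf'def
  have hfapp : ∀ i a b, f i a b = PJ.tmul (L i a) (R i b) := fun i a b => rfl
  have hf'app : ∀ i a b, f' i a b = PJ.tmul (R i a) (L i b) := fun i a b => rfl
  choose Ψ hΨ using fun i => P.lift (f i)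
  choose Ψ' hΨ' using fun i => P.lift (f' i)
  have hΨt : ∀ i a b, Ψ i (P.tmul a b) = PJ.tmul (L i a) (R i b) :=
    fun i a b => ((hΨ i).1 a b).trans (hfapp i a b)
  have hΨ't : ∀ i a b, Ψ' i (P.tmul a b) = PJ.tmul (R i a) (L i b) :=
    fun i a b => ((hΨ' i).1 a b).trans (hf'app i a b)
  have hsubc : ∀ y z : J, ((y - z : J) : A) = (y : A) - (z : A) := fun y z => rfl
  have hmulc : ∀ y z : J, ((y * z : J) : A) = (y : A) * (z : A) := fun y z => rfl
  clear_value f f'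
  clear hfdef hf'def hfapp hf'app hΨ hΨ'
  clear_value L R
  clear hLdef hRdef
  -- the candidate approximate diagonal
  refine ⟨κ × ι, m.curry l,
    fun p => (2:ℂ)⁻¹ • (Ψ p.2 (t p.1) + Ψ' p.2 (t p.1)), ?_, ?_, ?_, ?_⟩
  · exact Filter.curry_neBot
  · -- flip symmetry
    have flipΨ : ∀ (i : ι) (s : P.T), PJ.flip (Ψ i s) = Ψ' i (P.flip s) := fun i s =>
      P.ext_clm (PJ.flip.comp (Ψ i)) ((Ψ' i).comp P.flip)
        (fun a b => by
          simp only [ContinuousLinearMap.comp_apply]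
          rw [hΨt, PJ.flip_tmul, P.flip_tmul, hΨ't]) s
    have flipΨ' : ∀ (i : ι) (s : P.T), PJ.flip (Ψ' i s) = Ψ i (P.flip s) := fun i s =>
      P.ext_clm (PJ.flip.comp (Ψ' i)) ((Ψ i).comp P.flip)
        (fun a b => by
          simp only [ContinuousLinearMap.comp_apply]
          rw [hΨ't, PJ.flip_tmul, P.flip_tmul, hΨt]) s
    intro p
    rw [map_smul, map_add, flipΨ, flipΨ', hflip p.1, add_comm]
  · -- commutator condition
    intro x
    have hl' : ∀ (i : ι) (s : P.T), PJ.lmul x (Ψ' i s) = Ψ' i (P.lmul (x:A) s) := fun i s =>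
      P.ext_clm ((PJ.lmul x).comp (Ψ' i)) ((Ψ' i).comp (P.lmul (x:A)))
        (fun u v => by
          simp only [ContinuousLinearMap.comp_apply]
          rw [hΨ't, PJ.lmul_tmul, P.lmul_tmul, hΨ't]
          have : (x * R i u : J) = R i ((x:A) * u) := Subtype.ext
            (by rw [hmulc, hRa, hRa]; exact (mul_assoc _ _ _).symm)
          rw [this]) s
    have hr' : ∀ (i : ι) (s : P.T), PJ.rmul x (Ψ' i s) = Ψ' i (P.rmul (x:A) s) := fun i s =>
      P.ext_clm ((PJ.rmul x).comp (Ψ' i)) ((Ψ' i).comp (P.rmul (x:A)))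
        (fun u v => by
          simp only [ContinuousLinearMap.comp_apply]
          rw [hΨ't, PJ.rmul_tmul, P.rmul_tmul, hΨ't]
          have : (L i v * x : J) = L i (v * (x:A)) := Subtype.ext
            (by rw [hmulc, hLa, hLa]; exact mul_assoc _ _ _)
          rw [this]) s
    have hNl : ∀ (i : ι) (s : P.T), ‖PJ.lmul x (Ψ i s) - Ψ i (P.lmul (x:A) s)‖ ≤
        (M * ‖(x:A) * (e i:A) - (e i:A) * (x:A)‖) * ‖s‖ := by
      intro i s
      refine P.norm_clm_le ((PJ.lmul x).comp (Ψ i) - (Ψ i).comp (P.lmul (x:A))) _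
        (by positivity) (fun u v => ?_) s
      simp only [ContinuousLinearMap.sub_apply, ContinuousLinearMap.comp_apply]
      rw [hΨt, PJ.lmul_tmul, P.lmul_tmul, hΨt]
      have heq : PJ.tmul (x * L i u) (R i v) - PJ.tmul (L i ((x:A)*u)) (R i v)
          = PJ.tmul (x * L i u - L i ((x:A)*u)) (R i v) := by
        rw [map_sub, ContinuousLinearMap.sub_apply]
      rw [heq]
      refine (PJ.norm_tmul_le _ _).trans ?_
      have h1 : ‖x * L i u - L i ((x:A)*u)‖ ≤ ‖(x:A)*(e i:A) - (e i:A)*(x:A)‖ * ‖u‖ := by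
        have hc : ((x * L i u - L i ((x:A)*u) : J) : A)
            = ((x:A)*(e i:A) - (e i:A)*(x:A)) * u := by
          rw [hsubc, hmulc, hLa, hLa, sub_mul, ← mul_assoc, ← mul_assoc]
        calc ‖x * L i u - L i ((x:A)*u)‖
            = ‖((x:A)*(e i:A) - (e i:A)*(x:A)) * u‖ := congrArg norm hc
          _ ≤ _ := norm_mul_le _ _
      calc ‖x * L i u - L i ((x:A)*u)‖ * ‖R i v‖
          ≤ (‖(x:A)*(e i:A) - (e i:A)*(x:A)‖ * ‖u‖) * (M * ‖v‖) :=
            mul_le_mul h1 (hRn i v) (norm_nonneg _) (by positivity)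
        _ = (M * ‖(x:A)*(e i:A) - (e i:A)*(x:A)‖) * (‖u‖ * ‖v‖) := by ring
    have hNr : ∀ (i : ι) (s : P.T), ‖PJ.rmul x (Ψ i s) - Ψ i (P.rmul (x:A) s)‖ ≤
        (M * ‖(x:A) * (e i:A) - (e i:A) * (x:A)‖) * ‖s‖ := by
      intro i s
      refine P.norm_clm_le ((PJ.rmul x).comp (Ψ i) - (Ψ i).comp (P.rmul (x:A))) _
        (by positivity) (fun u v => ?_) s
      simp only [ContinuousLinearMap.sub_apply, ContinuousLinearMap.comp_apply]
      rw [hΨt, PJ.rmul_tmul, P.rmul_tmul, hΨt]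
      have heq : PJ.tmul (L i u) (R i v * x) - PJ.tmul (L i u) (R i (v * (x:A)))
          = PJ.tmul (L i u) (R i v * x - R i (v * (x:A))) := by
        rw [map_sub]
      rw [heq]
      refine (PJ.norm_tmul_le _ _).trans ?_
      have h1 : ‖R i v * x - R i (v * (x:A))‖ ≤
          ‖v‖ * ‖(x:A)*(e i:A) - (e i:A)*(x:A)‖ := by
        have hc : ((R i v * x - R i (v * (x:A)) : J) : A)
            = v * ((e i:A)*(x:A) - (x:A)*(e i:A)) := by
          rw [hsubc, hmulc, hRa, hRa, mul_sub, ← mul_assoc, ← mul_assoc]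
        calc ‖R i v * x - R i (v * (x:A))‖
            = ‖v * ((e i:A)*(x:A) - (x:A)*(e i:A))‖ := congrArg norm hc
          _ ≤ ‖v‖ * ‖(e i:A)*(x:A) - (x:A)*(e i:A)‖ := norm_mul_le _ _
          _ = ‖v‖ * ‖(x:A)*(e i:A) - (e i:A)*(x:A)‖ := by rw [norm_sub_rev]
      calc ‖L i u‖ * ‖R i v * x - R i (v * (x:A))‖
          ≤ (M * ‖u‖) * (‖v‖ * ‖(x:A)*(e i:A) - (e i:A)*(x:A)‖) :=
            mul_le_mul (hLn i u) h1 (norm_nonneg _) (by positivity)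
        _ = (M * ‖(x:A)*(e i:A) - (e i:A)*(x:A)‖) * (‖u‖ * ‖v‖) := by ring
    have hΨn : ∀ (i : ι) (s : P.T), ‖Ψ i s‖ ≤ (M*M) * ‖s‖ := by
      intro i s
      refine P.norm_clm_le (Ψ i) (M*M) (by positivity) (fun u v => ?_) s
      rw [hΨt]
      refine (PJ.norm_tmul_le _ _).trans ?_
      calc ‖L i u‖ * ‖R i v‖ ≤ (M * ‖u‖) * (M * ‖v‖) :=
            mul_le_mul (hLn i u) (hRn i v) (norm_nonneg _) (by positivity)
        _ = (M*M) * (‖u‖ * ‖v‖) := by ring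
    have hΨ'n : ∀ (i : ι) (s : P.T), ‖Ψ' i s‖ ≤ (M*M) * ‖s‖ := by
      intro i s
      refine P.norm_clm_le (Ψ' i) (M*M) (by positivity) (fun u v => ?_) s
      rw [hΨ't]
      refine (PJ.norm_tmul_le _ _).trans ?_
      calc ‖R i u‖ * ‖L i v‖ ≤ (M * ‖u‖) * (M * ‖v‖) :=
            mul_le_mul (hRn i u) (hLn i v) (norm_nonneg _) (by positivity)
        _ = (M*M) * (‖u‖ * ‖v‖) := by ring
    -- overall bound
    have key : ∀ (k : κ) (i : ι),
        ‖PJ.lmul x ((2:ℂ)⁻¹ • (Ψ i (t k) + Ψ' i (t k)))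
          - PJ.rmul x ((2:ℂ)⁻¹ • (Ψ i (t k) + Ψ' i (t k)))‖ ≤
        (M*M) * ‖P.lmul (x:A) (t k) - P.rmul (x:A) (t k)‖
          + (M * ‖(x:A) * (e i:A) - (e i:A) * (x:A)‖) * ‖t k‖ := by
      intro k i
      have decomp : PJ.lmul x ((2:ℂ)⁻¹ • (Ψ i (t k) + Ψ' i (t k)))
          - PJ.rmul x ((2:ℂ)⁻¹ • (Ψ i (t k) + Ψ' i (t k)))
          = (2:ℂ)⁻¹ • ((Ψ i (P.lmul (x:A) (t k) - P.rmul (x:A) (t k))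
              + Ψ' i (P.lmul (x:A) (t k) - P.rmul (x:A) (t k)))
            + ((PJ.lmul x (Ψ i (t k)) - Ψ i (P.lmul (x:A) (t k)))
              - (PJ.rmul x (Ψ i (t k)) - Ψ i (P.rmul (x:A) (t k))))) := by
        simp only [map_smul, map_add, map_sub, hl', hr']
        module
      rw [decomp]
      rw [norm_smul]
      have h2 : ‖(2:ℂ)⁻¹‖ = 2⁻¹ := by
        rw [norm_inv]; norm_num
      rw [h2]
      have b1 := hΨn i (P.lmul (x:A) (t k) - P.rmul (x:A) (t k))
      have b2 := hΨ'n i (P.lmul (x:A) (t k) - P.rmul (x:A) (t k))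
      have b3 := hNl i (t k)
      have b4 := hNr i (t k)
      have tri : ‖(Ψ i (P.lmul (x:A) (t k) - P.rmul (x:A) (t k))
              + Ψ' i (P.lmul (x:A) (t k) - P.rmul (x:A) (t k)))
            + ((PJ.lmul x (Ψ i (t k)) - Ψ i (P.lmul (x:A) (t k)))
              - (PJ.rmul x (Ψ i (t k)) - Ψ i (P.rmul (x:A) (t k))))‖ ≤
          ‖Ψ i (P.lmul (x:A) (t k) - P.rmul (x:A) (t k))‖
          + ‖Ψ' i (P.lmul (x:A) (t k) - P.rmul (x:A) (t k))‖
          + (‖PJ.lmul x (Ψ i (t k)) - Ψ i (P.lmul (x:A) (t k))‖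
            + ‖PJ.rmul x (Ψ i (t k)) - Ψ i (P.rmul (x:A) (t k))‖) :=
        (norm_add_le _ _).trans (add_le_add (norm_add_le _ _) (norm_sub_le _ _))
      nlinarith [norm_nonneg (P.lmul (x:A) (t k) - P.rmul (x:A) (t k)),
        norm_nonneg ((x:A) * (e i:A) - (e i:A) * (x:A)), norm_nonneg (t k)]
    -- the convergence
    have hδ : Tendsto (fun i => ‖(x:A) * (e i:A) - (e i:A) * (x:A)‖) l (𝓝 0) := by
      have h1 : Tendsto (fun i => ((x * e i : J) : A)) l (𝓝 (x:A)) :=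
        ((continuous_subtype_val.tendsto x).comp (happrox x).2)
      have h2 : Tendsto (fun i => ((e i * x : J) : A)) l (𝓝 (x:A)) :=
        ((continuous_subtype_val.tendsto x).comp (happrox x).1)
      have := (h1.sub h2).norm
      simpa using this
    rw [NormedAddCommGroup.tendsto_nhds_zero]
    intro ε hε
    rw [Filter.eventually_curry_iff]
    have hD : Tendsto (fun k => (M*M) * ‖P.lmul (x:A) (t k) - P.rmul (x:A) (t k)‖) m (𝓝 0) := by
      simpa using ((hcomm (x:A)).norm.const_mul (M*M))
    filter_upwards [hD.eventually_lt_const (half_pos hε)] with k hk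
    have hi : Tendsto (fun i => (M * ‖(x:A) * (e i:A) - (e i:A) * (x:A)‖) * ‖t k‖) l (𝓝 0) := by
      simpa using ((hδ.const_mul M).mul_const ‖t k‖)
    filter_upwards [hi.eventually_lt_const (half_pos hε)] with i hi2
    calc ‖PJ.lmul x ((2:ℂ)⁻¹ • (Ψ i (t k) + Ψ' i (t k)))
          - PJ.rmul x ((2:ℂ)⁻¹ • (Ψ i (t k) + Ψ' i (t k)))‖ ≤ _ := key k i
      _ < ε/2 + ε/2 := add_lt_add hk hi2
      _ = ε := add_halves ε
  · -- π condition
    have hπΨ : ∀ (i : ι) (s : P.T),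
        ((PJ.π (Ψ i s) : A)) = (e i:A) * (P.π s * (e i:A)) := by
      intro i s
      exact P.ext_clm (J.toSubmodule.subtypeL.comp (PJ.π.comp (Ψ i)))
        ((ContinuousLinearMap.mul ℂ A ((e i:A))).comp
          (((ContinuousLinearMap.mul ℂ A).flip ((e i:A))).comp P.π))
        (fun u v => by
          simp only [ContinuousLinearMap.comp_apply, ContinuousLinearMap.flip_apply,
            ContinuousLinearMap.mul_apply', ContinuousLinearMap.coe_comp',
            Function.comp_apply, Submodule.subtypeL_apply]
          show ((PJ.π (Ψ i (P.tmul u v)) : J) : A) = (e i:A) * (P.π (P.tmul u v) * (e i:A))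
          rw [hΨt, PJ.π_tmul, P.π_tmul]
          show ((L i u * R i v : J) : A) = _
          rw [hmulc, hLa, hRa]
          simp only [mul_assoc]) s
    have hπΨ' : ∀ (i : ι) (s : P.T),
        ((PJ.π (Ψ' i s) : A)) = P.π (P.lcirc ((e i:A) * (e i:A)) s) := by
      intro i s
      exact P.ext_clm (J.toSubmodule.subtypeL.comp (PJ.π.comp (Ψ' i)))
        (P.π.comp (P.lcirc ((e i:A) * (e i:A))))
        (fun u v => by
          simp only [ContinuousLinearMap.comp_apply, ContinuousLinearMap.coe_comp',
            Function.comp_apply, Submodule.subtypeL_apply]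
          show ((PJ.π (Ψ' i (P.tmul u v)) : J) : A)
              = P.π (P.lcirc ((e i:A) * (e i:A)) (P.tmul u v))
          rw [hΨ't, PJ.π_tmul, P.lcirc_tmul, P.π_tmul]
          show ((R i u * L i v : J) : A) = _
          rw [hmulc, hLa, hRa]
          simp only [mul_assoc]) s
    have hQn : ∀ (i : ι) (s : P.T),
        ‖P.π (P.lcirc ((e i:A) * (e i:A)) s)‖ ≤ (M*M) * ‖s‖ := by
      intro i s
      refine P.norm_clm_le (P.π.comp (P.lcirc ((e i:A) * (e i:A)))) (M*M)
        (by positivity) (fun u v => ?_) s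
      simp only [ContinuousLinearMap.comp_apply]
      rw [P.lcirc_tmul, P.π_tmul]
      refine (norm_mul_le _ _).trans ?_
      have h1 : ‖(e i:A) * (e i:A) * v‖ ≤ M * (M * ‖v‖) := by
        rw [mul_assoc]
        exact ((hMb i _).1).trans (mul_le_mul_of_nonneg_left (hMb i v).1 hM0.le)
      calc ‖u‖ * ‖(e i:A) * (e i:A) * v‖ ≤ ‖u‖ * (M * (M * ‖v‖)) :=
            mul_le_mul_of_nonneg_left h1 (norm_nonneg _)
        _ = (M*M) * (‖u‖ * ‖v‖) := by ring
    intro x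
    have hA : Tendsto (fun p : κ × ι => PJ.π (Ψ p.2 (t p.1)) * x) (m.curry l) (𝓝 x) := by
      rw [Metric.tendsto_nhds]
      intro ε hε
      rw [Filter.eventually_curry_iff]
      have hk0 : Tendsto (fun k => M * ‖P.π (t k) * (x:A) - (x:A)‖) m (𝓝 0) := by
        have := ((hπ (x:A)).sub_const (x:A)).norm
        simpa using this.const_mul M
      filter_upwards [hk0.eventually_lt_const (half_pos hε)] with k hk
      have hexc : Tendsto (fun i => ((e i * x : J) : A)) l (𝓝 (x:A)) :=
        (continuous_subtype_val.tendsto x).comp (happrox x).1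
      have hd0 : Tendsto (fun i =>
          (M * (‖P.π (t k)‖ + 1) + M + 1) * ‖(e i:A) * (x:A) - (x:A)‖) l (𝓝 0) := by
        have := (hexc.sub_const (x:A)).norm
        simpa [hmulc] using this.const_mul (M * (‖P.π (t k)‖ + 1) + M + 1)
      filter_upwards [hd0.eventually_lt_const (half_pos hε)] with i hi
      rw [dist_eq_norm]
      have hcoe : ((PJ.π (Ψ i (t k)) * x - x : J) : A)
          = (e i:A) * (P.π (t k) * (e i:A)) * (x:A) - (x:A) := by
        rw [hsubc, hmulc, hπΨ]
      have est : ‖(e i:A) * (P.π (t k) * (e i:A)) * (x:A) - (x:A)‖ ≤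
          M * ‖P.π (t k) * (x:A) - (x:A)‖
            + (M * (‖P.π (t k)‖ + 1) + M + 1) * ‖(e i:A) * (x:A) - (x:A)‖ := by
        set q := (e i:A)
        set p := P.π (t k)
        set c := (x:A)
        have e0 : q * (p * q) * c = q * (p * (q * c)) := by simp only [mul_assoc]
        rw [e0]
        have t0 : q * (p * (q * c)) - c
            = (q * (p * (q*c)) - q * (q*c)) + (q*(q*c) - c) := by abel
        have t1 : ‖q * (p*(q*c)) - q*(q*c)‖ ≤ M * ‖p*(q*c) - q*c‖ := by
          rw [← mul_sub]; exact (hMb i _).1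
        have t2 : ‖p*(q*c) - q*c‖ ≤ ‖p‖ * ‖q*c - c‖ + ‖p*c - c‖ + ‖q*c - c‖ := by
          have t2a : p*(q*c) - q*c = (p*(q*c) - p*c) + ((p*c - c) + (c - q*c)) := by abel
          have t2b : ‖p*(q*c) - p*c‖ ≤ ‖p‖*‖q*c-c‖ := by
            rw [← mul_sub]; exact norm_mul_le _ _
          have t2c := norm_add_le (p*(q*c) - p*c) ((p*c - c) + (c - q*c))
          have t2d := norm_add_le (p*c - c) (c - q*c)
          have t2e : ‖c - q*c‖ = ‖q*c - c‖ := norm_sub_rev _ _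
          rw [← t2a] at t2c
          linarith
        have t3 : ‖q*(q*c) - c‖ ≤ M*‖q*c - c‖ + ‖q*c - c‖ := by
          have t3a : q*(q*c) - c = (q*(q*c) - q*c) + (q*c - c) := by abel
          have t3b : ‖q*(q*c) - q*c‖ ≤ M * ‖q*c - c‖ := by
            rw [← mul_sub]; exact (hMb i _).1
          have t3c := norm_add_le (q*(q*c) - q*c) (q*c - c)
          rw [← t3a] at t3c
          linarith
        have tt := norm_add_le (q*(p*(q*c)) - q*(q*c)) (q*(q*c) - c)
        rw [← t0] at tt
        nlinarith [norm_nonneg (q*c - c), norm_nonneg p, hM0.le,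
          mul_le_mul_of_nonneg_left t2 hM0.le]
      calc ‖PJ.π (Ψ i (t k)) * x - x‖
          = ‖(e i:A) * (P.π (t k) * (e i:A)) * (x:A) - (x:A)‖ := congrArg norm hcoe
        _ ≤ _ := est
        _ < ε/2 + ε/2 := add_lt_add hk hi
        _ = ε := add_halves ε
    have hB : Tendsto (fun p : κ × ι => PJ.π (Ψ' p.2 (t p.1)) * x) (m.curry l) (𝓝 x) := by
      rw [Metric.tendsto_nhds]
      intro ε hε
      rw [Filter.eventually_curry_iff]
      have hden : (0:ℝ) < M*M*‖(x:A)‖ + ‖P.π‖*‖(x:A)‖ + 1 := by positivity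
      have hδpos : 0 < (ε/4) / (M*M*‖(x:A)‖ + ‖P.π‖*‖(x:A)‖ + 1) :=
        div_pos (by linarith) hden
      have hδmul : ((ε/4) / (M*M*‖(x:A)‖ + ‖P.π‖*‖(x:A)‖ + 1))
          * (M*M*‖(x:A)‖ + ‖P.π‖*‖(x:A)‖ + 1) = ε/4 :=
        div_mul_cancel₀ _ (ne_of_gt hden)
      have hk0 : Tendsto (fun k => ‖P.π (t k) * (x:A) - (x:A)‖) m (𝓝 0) := by
        simpa using ((hπ (x:A)).sub_const (x:A)).norm
      filter_upwards [hk0.eventually_lt_const (show (0:ℝ) < ε/4 by linarith)] with k hk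
      obtain ⟨F, u, v, hτ⟩ := P.exists_finset_approx (t k) hδpos
      have hz : ∀ n, v n * (x:A) ∈ J := fun n => hJl (v n) _ x.2
      have hval : P.π (∑ n ∈ F, P.tmul (u n) (v n)) * (x:A)
          = ∑ n ∈ F, u n * (v n * (x:A)) := by
        rw [map_sum, Finset.sum_mul]
        exact Finset.sum_congr rfl (fun n _ => by rw [P.π_tmul, mul_assoc])
      have hmid : Tendsto (fun i =>
          P.π (P.lcirc ((e i:A)*(e i:A)) (∑ n ∈ F, P.tmul (u n) (v n))) * (x:A)) l
          (𝓝 (P.π (∑ n ∈ F, P.tmul (u n) (v n)) * (x:A))) := by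
        have hfun : ∀ i, P.π (P.lcirc ((e i:A)*(e i:A)) (∑ n ∈ F, P.tmul (u n) (v n))) * (x:A)
            = ∑ n ∈ F, u n * ((e i * (e i * (⟨v n * (x:A), hz n⟩ : J)) : J) : A) := by
          intro i
          rw [map_sum, map_sum, Finset.sum_mul]
          refine Finset.sum_congr rfl (fun n _ => ?_)
          rw [P.lcirc_tmul, P.π_tmul, hmulc, hmulc]
          show u n * ((e i:A) * (e i:A) * v n) * (x:A)
              = u n * ((e i:A) * ((e i:A) * (v n * (x:A))))
          simp only [mul_assoc]
        have hterm : ∀ n ∈ F, Tendsto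
            (fun i => u n * ((e i * (e i * (⟨v n * (x:A), hz n⟩ : J)) : J) : A)) l
            (𝓝 (u n * (v n * (x:A)))) := by
          intro n _
          set z : J := (⟨v n * (x:A), hz n⟩ : J) with hzdef
          have h1 : Tendsto (fun i => (e i * z : J)) l (𝓝 z) := (happrox z).1
          have h2 : Tendsto (fun i => (e i * (e i * z) : J)) l (𝓝 z) := by
            rw [tendsto_iff_norm_sub_tendsto_zero]
            refine squeeze_zero (fun i => norm_nonneg _)
              (g := fun i => (M+1) * ‖(e i * z : J) - z‖) (fun i => ?_) ?_
            · show ‖(e i * (e i * z) : J) - z‖ ≤ (M + 1) * ‖(e i * z : J) - z‖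
              have d1 : (e i * (e i * z) : J) - z
                  = e i * (e i * z - z) + (e i * z - z) := by rw [mul_sub]; abel
              rw [d1]
              have n1 : ‖(e i * (e i * z - z) : J)‖ ≤ M * ‖(e i * z - z : J)‖ :=
                (hMb i _).1
              have n2 := norm_add_le (e i * (e i * z - z) : J) (e i * z - z)
              linarith
            · have := (tendsto_iff_norm_sub_tendsto_zero.mp h1).const_mul (M+1)
              simpa using this
          have h3 : Tendsto (fun i => ((e i * (e i * z) : J) : A)) l (𝓝 (z : A)) :=
            (continuous_subtype_val.tendsto z).comp h2
          have h4 := h3.const_mul (u n)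
          simpa [hzdef] using h4
        have hsum := tendsto_finset_sum F hterm
        rw [hval]
        exact hsum.congr (fun i => (hfun i).symm)
      filter_upwards [(Metric.tendsto_nhds.mp hmid) (ε/4) (by linarith)] with i hmi
      rw [dist_eq_norm] at hmi ⊢
      have hcoe : ((PJ.π (Ψ' i (t k)) * x - x : J) : A)
          = P.π (P.lcirc ((e i:A)*(e i:A)) (t k)) * (x:A) - (x:A) := by
        rw [hsubc, hmulc, hπΨ']
      have split : P.π (P.lcirc ((e i:A)*(e i:A)) (t k)) * (x:A) - (x:A)
          = (P.π (P.lcirc ((e i:A)*(e i:A)) (t k - ∑ n ∈ F, P.tmul (u n) (v n)))) * (x:A)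
            + ((P.π (P.lcirc ((e i:A)*(e i:A)) (∑ n ∈ F, P.tmul (u n) (v n)))) * (x:A)
              - (P.π (∑ n ∈ F, P.tmul (u n) (v n))) * (x:A))
            + (P.π ((∑ n ∈ F, P.tmul (u n) (v n)) - t k)) * (x:A)
            + (P.π (t k) * (x:A) - (x:A)) := by
        simp only [map_sub, sub_mul]
        abel
      have n1 : ‖(P.π (P.lcirc ((e i:A)*(e i:A)) (t k - ∑ n ∈ F, P.tmul (u n) (v n)))) * (x:A)‖
          ≤ (M*M) * ‖t k - ∑ n ∈ F, P.tmul (u n) (v n)‖ * ‖(x:A)‖ :=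
        (norm_mul_le _ _).trans (mul_le_mul_of_nonneg_right (hQn i _) (norm_nonneg _))
      have n3 : ‖(P.π ((∑ n ∈ F, P.tmul (u n) (v n)) - t k)) * (x:A)‖
          ≤ ‖P.π‖ * ‖t k - ∑ n ∈ F, P.tmul (u n) (v n)‖ * ‖(x:A)‖ := by
        refine (norm_mul_le _ _).trans (mul_le_mul_of_nonneg_right ?_ (norm_nonneg _))
        refine (P.π.le_opNorm _).trans ?_
        rw [norm_sub_rev]
      have ntri : ‖P.π (P.lcirc ((e i:A)*(e i:A)) (t k)) * (x:A) - (x:A)‖ ≤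
          ‖(P.π (P.lcirc ((e i:A)*(e i:A)) (t k - ∑ n ∈ F, P.tmul (u n) (v n)))) * (x:A)‖
          + ‖(P.π (P.lcirc ((e i:A)*(e i:A)) (∑ n ∈ F, P.tmul (u n) (v n)))) * (x:A)
              - (P.π (∑ n ∈ F, P.tmul (u n) (v n))) * (x:A)‖
          + ‖(P.π ((∑ n ∈ F, P.tmul (u n) (v n)) - t k)) * (x:A)‖
          + ‖P.π (t k) * (x:A) - (x:A)‖ := by
        rw [split]
        exact (norm_add_le _ _).trans (add_le_add_left ((norm_add_le _ _).trans
          (add_le_add_left (norm_add_le _ _) _)) _)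
      have hprod : ‖t k - ∑ n ∈ F, P.tmul (u n) (v n)‖
            * (M*M*‖(x:A)‖ + ‖P.π‖*‖(x:A)‖ + 1)
          < ((ε/4) / (M*M*‖(x:A)‖ + ‖P.π‖*‖(x:A)‖ + 1))
            * (M*M*‖(x:A)‖ + ‖P.π‖*‖(x:A)‖ + 1) :=
        mul_lt_mul_of_pos_right hτ hden
      calc ‖PJ.π (Ψ' i (t k)) * x - x‖
          = ‖P.π (P.lcirc ((e i:A)*(e i:A)) (t k)) * (x:A) - (x:A)‖ := congrArg norm hcoe
        _ ≤ _ := ntri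
        _ < ε := by
          rw [hδmul] at hprod
          nlinarith [norm_nonneg (t k - ∑ n ∈ F, P.tmul (u n) (v n)),
            norm_nonneg (x:A), ContinuousLinearMap.opNorm_nonneg P.π, hM0.le]
    have hfuneq : ∀ p : κ × ι,
        PJ.π ((2:ℂ)⁻¹ • (Ψ p.2 (t p.1) + Ψ' p.2 (t p.1))) * x
        = (2:ℂ)⁻¹ • (PJ.π (Ψ p.2 (t p.1)) * x + PJ.π (Ψ' p.2 (t p.1)) * x) := by
      intro p
      rw [map_smul, map_add, smul_mul_assoc, add_mul]
    have hcomb := (hA.add hB).const_smul ((2:ℂ)⁻¹)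
    have hx2 : (2:ℂ)⁻¹ • ((x : J) + x) = x := by
      rw [← two_smul ℂ (x : J), smul_smul]
      norm_num
    rw [hx2] at hcomb
    exact hcomb.congr (fun p => (hfuneq p).symm)
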